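/- Let X be a Banach space on which the weak and norm topologies coincide on the unit sphere of X*, and suppose every x_i* in a sequence of unit vectors of X* is a w*-w point of continuity of X*_1. Let Ω be compact Hausdorff and suppose Λ = ∑_{i=1}^∞ α_i (δ_{ω_i} ⊗ x_i*) with α_i ∈ (0,1], ∑ α_i = 1, and each ω_i an isolated point of Ω. Then Λ is a w*-w point of continuity of C(Ω, X)*_1. -/

import Mathlib

set_option linter.unusedSectionVars false
set_option maxHeartbeats 1000000


open NormedSpace Filter Topology


variable {Ω : Type*} [TopologicalSpace Ω] [CompactSpace Ω]
variable {X : Type*} [NormedAddCommGroup X] [NormedSpace ℝ X]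

/-- The functional `δ_ω ⊗ x* : f ↦ x*(f ω)` on `C(Ω, X)`. -/
noncomputable def deltaTensor (ω : Ω) (x : StrongDual ℝ X) : StrongDual ℝ C(Ω, X) :=
  LinearMap.mkContinuous
    { toFun := fun f : C(Ω, X) => x (f ω)
      map_add' := fun f g => by simp
      map_smul' := fun c f => by simp }
    ‖x‖ (fun f => by
      calc ‖x (f ω)‖ ≤ ‖x‖ * ‖f ω‖ := x.le_opNorm _
        _ ≤ ‖x‖ * ‖f‖ :=
          mul_le_mul_of_nonneg_left (f.norm_coe_le_norm ω) (norm_nonneg x))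

/-- `x*` in the dual unit ball is a *w\*-w point of continuity*: every net (filter) in the
dual unit ball converging weak\* to `x*` converges weakly to `x*`. -/
def IsWStarWPC {E : Type*} [NormedAddCommGroup E] [NormedSpace ℝ E]
    (x : StrongDual ℝ E) : Prop :=
  ∀ l : Filter (StrongDual ℝ E), l.NeBot → (∀ᶠ φ in l, ‖φ‖ ≤ 1) →
    (∀ v : E, Tendsto (fun φ : StrongDual ℝ E => φ v) l (𝓝 (x v))) →
    ∀ Λ : StrongDual ℝ (StrongDual ℝ E), Tendsto (fun φ : StrongDual ℝ E => Λ φ) l (𝓝 (Λ x))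

section Aux
variable {Ω : Type*} [TopologicalSpace Ω] [CompactSpace Ω]
variable {X : Type*} [NormedAddCommGroup X] [NormedSpace ℝ X]

/-- Restriction of a continuous map to a clopen set (zero outside). -/
noncomputable def resC (s : Set Ω) (hs : IsClopen s) (f : C(Ω, X)) : C(Ω, X) :=
  ⟨s.indicator f, by
    apply continuous_indicator _ f.continuous.continuousOn
    rw [hs.frontier_eq]; simp⟩

@[simp] lemma resC_apply (s : Set Ω) (hs : IsClopen s) (f : C(Ω, X)) (p : Ω) :
    resC s hs f p = s.indicator (⇑f) p := rfl

lemma norm_resC_le (s : Set Ω) (hs : IsClopen s) (f : C(Ω, X)) : ‖resC s hs f‖ ≤ ‖f‖ := by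
  rw [ContinuousMap.norm_le _ (norm_nonneg f)]
  intro p
  by_cases h : p ∈ s
  · simpa [Set.indicator_of_mem h] using f.norm_coe_le_norm p
  · simp [Set.indicator_of_notMem h]

/-- Restriction to a clopen set as a continuous linear map. -/
noncomputable def resCLM (s : Set Ω) (hs : IsClopen s) : C(Ω, X) →L[ℝ] C(Ω, X) :=
  LinearMap.mkContinuous
    { toFun := resC s hs
      map_add' := fun f g => by
        ext p; by_cases h : p ∈ s <;>
          simp [Set.indicator_of_mem, Set.indicator_of_notMem, h]
      map_smul' := fun c f => by
        ext p; by_cases h : p ∈ s <;>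
          simp [Set.indicator_of_mem, Set.indicator_of_notMem, h] }
    1 (fun f => by simpa using norm_resC_le s hs f)

@[simp] lemma resCLM_apply (s : Set Ω) (hs : IsClopen s) (f : C(Ω, X)) (p : Ω) :
    resCLM s hs f p = s.indicator (⇑f) p := rfl

lemma norm_resCLM_apply_le (s : Set Ω) (hs : IsClopen s) (f : C(Ω, X)) :
    ‖resCLM s hs f‖ ≤ ‖f‖ := norm_resC_le s hs f

/-- The constant-function embedding `X →L[ℝ] C(Ω, X)`. -/
noncomputable def constCLM : X →L[ℝ] C(Ω, X) :=
  LinearMap.mkContinuous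
    { toFun := fun v => ContinuousMap.const Ω v
      map_add' := fun v w => rfl
      map_smul' := fun c v => rfl }
    1 (fun v => by
      rw [one_mul, ContinuousMap.norm_le _ (norm_nonneg v)]
      intro p; simp [ContinuousMap.const])

@[simp] lemma constCLM_apply (v : X) (p : Ω) : (constCLM v : C(Ω, X)) p = v := rfl

/-- For a real functional one can almost attain the norm with positive sign. -/
lemma exists_unit_gt {E : Type*} [NormedAddCommGroup E] [NormedSpace ℝ E]
    (ψ : E →L[ℝ] ℝ) {c : ℝ} (hc : c < ‖ψ‖) : ∃ v : E, ‖v‖ ≤ 1 ∧ c < ψ v := by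
  obtain ⟨w, hw1, hw2⟩ := ψ.exists_lt_apply_of_lt_opNorm hc
  rcases le_or_gt 0 (ψ w) with h | h
  · exact ⟨w, hw1.le, by rwa [Real.norm_eq_abs, abs_of_nonneg h] at hw2⟩
  · refine ⟨-w, by simpa using hw1.le, ?_⟩
    rw [map_neg]
    rwa [Real.norm_eq_abs, abs_of_neg h] at hw2

end Aux

/-- **Sufficiency of the structure condition when weak = norm on `S(X*)`.**  Suppose the
weak and norm topologies coincide on the unit sphere of `X*` (weakly convergent nets of
unit functionals converge in norm), each `x_i* ∈ S(X*)` is a w\*-w point of continuity of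
`X*₁`, and `Λ = ∑ α_i (δ_{ω_i} ⊗ x_i*)` with `α_i ∈ (0, 1]`, `∑ α_i = 1` and each `ω_i`
an isolated point of `Ω`.  Then `Λ` is a w\*-w point of continuity of `C(Ω, X)*₁`. -/
theorem isWStarWPC_sum_of_weak_eq_norm [T2Space Ω] [CompleteSpace X]
    (hwn : ∀ y : StrongDual ℝ X, ‖y‖ = 1 →
      ∀ l : Filter (StrongDual ℝ X), l.NeBot → (∀ᶠ φ in l, ‖φ‖ = 1) →
        (∀ Λ : StrongDual ℝ (StrongDual ℝ X), Tendsto (fun φ : StrongDual ℝ X => Λ φ) l (𝓝 (Λ y))) →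
        Tendsto (fun φ : StrongDual ℝ X => ‖φ - y‖) l (𝓝 0))
    (Λ : StrongDual ℝ C(Ω, X)) (hΛball : ‖Λ‖ ≤ 1)
    (α : ℕ → ℝ) (hα : ∀ i, α i ∈ Set.Ioc (0 : ℝ) 1) (hαsum : HasSum α 1)
    (ω : ℕ → Ω) (hω : Function.Injective ω)
    (hiso : ∀ i, IsOpen ({ω i} : Set Ω))
    (x : ℕ → StrongDual ℝ X) (hx : ∀ i, ‖x i‖ = 1) (hxpc : ∀ i, IsWStarWPC (x i))
    (hrep : ∀ f : C(Ω, X), Λ f = ∑' i, α i * (deltaTensor (ω i) (x i)) f) :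
    IsWStarWPC Λ := by
  classical
  have hαsummable : Summable α := hαsum.summable
  have hαpos : ∀ i, 0 < α i := fun i => (hα i).1
  have hαle : ∀ i, α i ≤ 1 := fun i => (hα i).2
  have hαnn : ∀ i, 0 ≤ α i := fun i => (hαpos i).le
  have hclo : ∀ i, IsClopen ({ω i} : Set Ω) := fun i => ⟨isClosed_singleton, hiso i⟩
  set S : ℕ → Set Ω := fun n => ⋃ i ∈ Finset.range n, ({ω i} : Set Ω) with hSdef
  have hcloS : ∀ n, IsClopen (S n) := by
    intro n
    constructor
    · exact Set.Finite.isClosed <|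
        Set.Finite.biUnion (Finset.range n).finite_toSet fun i _ => Set.finite_singleton _
    · exact isOpen_biUnion fun i _ => hiso i
  set T : ℕ → X →L[ℝ] C(Ω, X) := fun i => (resCLM ({ω i}) (hclo i)).comp constCLM with hTdef
  set R : ℕ → C(Ω, X) →L[ℝ] C(Ω, X) := fun n => resCLM (S n)ᶜ (hcloS n).compl with hRdef
  -- pointwise formulas
  have hT_apply : ∀ i (v : X) (p : Ω), T i v p = if p = ω i then v else 0 := by
    intro i v p
    by_cases h : p = ω i <;> simp [hTdef, Set.indicator, h]
  have hT_omega : ∀ i j (v : X), T i v (ω j) = if j = i then v else 0 := by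
    intro i j v
    rw [hT_apply]
    by_cases h : j = i
    · simp [h]
    · rw [if_neg (fun hh => h (hω hh)), if_neg h]
  have hT_norm : ∀ i (v : X), ‖T i v‖ ≤ ‖v‖ := by
    intro i v
    refine le_trans (norm_resCLM_apply_le {ω i} (hclo i) (constCLM v)) ?_
    rw [ContinuousMap.norm_le _ (norm_nonneg v)]
    intro p; simp [ContinuousMap.const]
  have hR_apply : ∀ n (f : C(Ω, X)) (p : Ω), R n f p = if p ∈ S n then 0 else f p := by
    intro n f p
    by_cases h : p ∈ S n <;> simp [hRdef, Set.indicator, h]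
  have hR_norm : ∀ n (f : C(Ω, X)), ‖R n f‖ ≤ ‖f‖ := fun n f => norm_resCLM_apply_le _ _ _
  have hmemS : ∀ {n j}, j < n → ω j ∈ S n := by
    intro n j hj
    exact Set.mem_biUnion (Finset.mem_range.2 hj) rfl
  have homegaS : ∀ {n j}, ω j ∈ S n → j < n := by
    intro n j hj
    obtain ⟨i, hi, hji⟩ := Set.mem_iUnion₂.1 hj
    rw [Set.mem_singleton_iff] at hji
    exact (hω hji) ▸ Finset.mem_range.1 hi
  -- sum of T's pointwise
  have hsumT_omega : ∀ n (v : ℕ → X) (j : ℕ), j < n →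
      (∑ i ∈ Finset.range n, T i (v i)) (ω j) = v j := by
    intro n v j hj
    rw [ContinuousMap.coe_sum, Finset.sum_apply]
    rw [Finset.sum_eq_single j]
    · simp [hT_omega]
    · intro i hi hij
      rw [hT_omega, if_neg (Ne.symm hij)]
    · intro h; exact absurd (Finset.mem_range.2 hj) h
  have hsumT_not : ∀ n (v : ℕ → X) (p : Ω), p ∉ S n →
      (∑ i ∈ Finset.range n, T i (v i)) p = 0 := by
    intro n v p hp
    rw [ContinuousMap.coe_sum, Finset.sum_apply]
    refine Finset.sum_eq_zero fun i hi => ?_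
    rw [hT_apply]
    have : p ≠ ω i := fun h => hp (h ▸ hmemS (Finset.mem_range.1 hi))
    simp [this]
  -- decomposition
  have hdecomp : ∀ n (f : C(Ω, X)),
      (∑ i ∈ Finset.range n, T i (f (ω i))) + R n f = f := by
    intro n f
    ext p
    rw [ContinuousMap.add_apply, hR_apply]
    by_cases hp : p ∈ S n
    · obtain ⟨i, hi, hpi⟩ := Set.mem_iUnion₂.1 hp
      rw [Set.mem_singleton_iff] at hpi
      subst hpi
      rw [hsumT_omega n _ i (Finset.mem_range.1 hi)]
      simp [hmemS (Finset.mem_range.1 hi)]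
    · rw [hsumT_not n _ p hp]
      simp [hp]
  -- the key norm inequality
  have hkey : ∀ n (φ : StrongDual ℝ C(Ω, X)),
      (∑ i ∈ Finset.range n, ‖φ.comp (T i)‖) + ‖φ.comp (R n)‖ ≤ ‖φ‖ := by
    intro n φ
    refine le_of_forall_pos_le_add fun ε hε => ?_
    set δ : ℝ := ε / (n + 1) with hδdef
    have hδ : 0 < δ := by positivity
    have hvi : ∀ i, ∃ v : X, ‖v‖ ≤ 1 ∧ ‖φ.comp (T i)‖ - δ < (φ.comp (T i)) v :=
      fun i => exists_unit_gt _ (by linarith)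
    choose v hv1 hv2 using hvi
    obtain ⟨g, hg1, hg2⟩ :=
      exists_unit_gt (φ.comp (R n)) (show ‖φ.comp (R n)‖ - δ < _ by linarith)
    set f : C(Ω, X) := (∑ i ∈ Finset.range n, T i (v i)) + R n g with hfdef
    have hf : ‖f‖ ≤ 1 := by
      rw [ContinuousMap.norm_le _ zero_le_one]
      intro p
      rw [hfdef, ContinuousMap.add_apply, hR_apply]
      by_cases hp : p ∈ S n
      · obtain ⟨i, hi, hpi⟩ := Set.mem_iUnion₂.1 hp
        rw [Set.mem_singleton_iff] at hpi; subst hpi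
        rw [hsumT_omega n _ i (Finset.mem_range.1 hi), if_pos hp, add_zero]
        exact hv1 i
      · rw [hsumT_not n _ p hp, if_neg hp, zero_add]
        exact (g.norm_coe_le_norm p).trans hg1
    have hφf : φ f = (∑ i ∈ Finset.range n, φ (T i (v i))) + φ (R n g) := by
      rw [hfdef, map_add, map_sum]
    have hφfle : φ f ≤ ‖φ‖ := by
      calc φ f ≤ ‖φ f‖ := le_abs_self _
        _ ≤ ‖φ‖ * ‖f‖ := φ.le_opNorm f
        _ ≤ ‖φ‖ := mul_le_of_le_one_right (norm_nonneg φ) hf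
    have hsum : ∑ i ∈ Finset.range n, ‖φ.comp (T i)‖
        ≤ (∑ i ∈ Finset.range n, φ (T i (v i))) + n * δ := by
      have := Finset.sum_le_sum (s := Finset.range n)
        (f := fun i => ‖φ.comp (T i)‖) (g := fun i => φ (T i (v i)) + δ)
        (fun i _ => by
          have h := hv2 i
          have he : (φ.comp (T i)) (v i) = φ (T i (v i)) := rfl
          rw [he] at h
          show ‖φ.comp (T i)‖ ≤ φ (T i (v i)) + δ
          linarith)
      rwa [Finset.sum_add_distrib, Finset.sum_const, Finset.card_range,
        nsmul_eq_mul] at this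
    have hδε : ((n : ℝ) + 1) * δ = ε := by
      rw [hδdef]; field_simp
    have hg2' : ‖φ.comp (R n)‖ < φ (R n g) + δ := by
      have : (φ.comp (R n)) g = φ (R n g) := rfl
      linarith [hg2, this ▸ hg2]
    nlinarith [hφfle, hφf]
  -- Λ on pieces
  have hΛT : ∀ i (v : X), Λ (T i v) = α i * x i v := by
    intro i v
    rw [hrep]
    rw [tsum_eq_single i]
    · show α i * x i (T i v (ω i)) = α i * x i v
      rw [hT_omega, if_pos rfl]
    · intro j hj
      show α j * x j (T i v (ω j)) = 0
      rw [hT_omega, if_neg hj, map_zero, mul_zero]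
  have partial_le : ∀ n, ∑ i ∈ Finset.range n, α i ≤ 1 := by
    intro n
    exact sum_le_hasSum _ (fun i _ => hαnn i) hαsum
  have hΛR : ∀ n (f : C(Ω, X)), |Λ (R n f)| ≤ (1 - ∑ i ∈ Finset.range n, α i) * ‖f‖ := by
    intro n f
    set c : ℕ → ℝ := fun j => α j * x j (R n f (ω j)) with hcdef
    have hcb : ∀ j, ‖c j‖ ≤ α j * ‖f‖ := by
      intro j
      rw [hcdef]
      simp only [norm_mul, Real.norm_eq_abs, abs_of_nonneg (hαnn j)]
      refine mul_le_mul_of_nonneg_left ?_ (hαnn j)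
      calc |x j (R n f (ω j))| ≤ ‖x j‖ * ‖R n f (ω j)‖ := (x j).le_opNorm _
        _ = ‖R n f (ω j)‖ := by rw [hx j, one_mul]
        _ ≤ ‖R n f‖ := (R n f).norm_coe_le_norm _
        _ ≤ ‖f‖ := hR_norm n f
    have hαf : Summable (fun j => α j * ‖f‖) := hαsummable.mul_right ‖f‖
    have hcnorm : Summable (fun j => ‖c j‖) :=
      hαf.of_nonneg_of_le (fun _ => norm_nonneg _) hcb
    have hcs : Summable c := hcnorm.of_norm
    have hc0 : ∀ j < n, c j = 0 := by
      intro j hj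
      rw [hcdef]
      show α j * x j (R n f (ω j)) = 0
      rw [hR_apply, if_pos (hmemS hj), map_zero, mul_zero]
    have hΛeq : Λ (R n f) = ∑' j, c (j + n) := by
      rw [hrep (R n f)]
      have he : (fun j => α j * (deltaTensor (ω j) (x j)) (R n f)) = c := rfl
      rw [he, ← Summable.sum_add_tsum_nat_add n hcs, Finset.sum_eq_zero (fun j hj => hc0 j (Finset.mem_range.1 hj)), zero_add]
    have htail : ∑' j, α (j + n) * ‖f‖ = (1 - ∑ i ∈ Finset.range n, α i) * ‖f‖ := by
      rw [tsum_mul_right]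
      have := Summable.sum_add_tsum_nat_add n hαsummable
      rw [hαsum.tsum_eq] at this
      have h2 : ∑' j, α (j + n) = 1 - ∑ i ∈ Finset.range n, α i := by linarith
      rw [h2]
    rw [hΛeq]
    calc |∑' j, c (j + n)| ≤ ∑' j, ‖c (j + n)‖ := by
          simpa using norm_tsum_le_tsum_norm (hcnorm.comp_injective (add_left_injective n))
      _ ≤ ∑' j, α (j + n) * ‖f‖ := by
          refine Summable.tsum_le_tsum (fun j => hcb (j + n))
            (hcnorm.comp_injective (add_left_injective n))
            (hαf.comp_injective (add_left_injective n))
      _ = (1 - ∑ i ∈ Finset.range n, α i) * ‖f‖ := htail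
  -- master bound
  have hmaster : ∀ n (φ : StrongDual ℝ C(Ω, X)),
      ‖φ - Λ‖ ≤ (∑ i ∈ Finset.range n, ‖φ.comp (T i) - α i • x i‖)
        + ‖φ.comp (R n)‖ + (1 - ∑ i ∈ Finset.range n, α i) := by
    intro n φ
    have htail0 : 0 ≤ 1 - ∑ i ∈ Finset.range n, α i := by linarith [partial_le n]
    have hbnn : 0 ≤ (∑ i ∈ Finset.range n, ‖φ.comp (T i) - α i • x i‖)
        + ‖φ.comp (R n)‖ + (1 - ∑ i ∈ Finset.range n, α i) := by
      have : 0 ≤ ∑ i ∈ Finset.range n, ‖φ.comp (T i) - α i • x i‖ :=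
        Finset.sum_nonneg fun i _ => norm_nonneg _
      positivity
    refine ContinuousLinearMap.opNorm_le_bound _ hbnn fun f => ?_
    have hdf := hdecomp n f
    have hφ : φ f = (∑ i ∈ Finset.range n, φ (T i (f (ω i)))) + φ (R n f) := by
      conv_lhs => rw [← hdf]
      rw [map_add, map_sum]
    have hΛf : Λ f = (∑ i ∈ Finset.range n, α i * x i (f (ω i))) + Λ (R n f) := by
      conv_lhs => rw [← hdf]
      rw [map_add, map_sum]
      congr 1
      exact Finset.sum_congr rfl fun i _ => hΛT i _
    have hs1 : ‖∑ i ∈ Finset.range n, (φ (T i (f (ω i))) - α i * x i (f (ω i)))‖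
        ≤ (∑ i ∈ Finset.range n, ‖φ.comp (T i) - α i • x i‖) * ‖f‖ := by
      calc ‖∑ i ∈ Finset.range n, (φ (T i (f (ω i))) - α i * x i (f (ω i)))‖
          ≤ ∑ i ∈ Finset.range n, ‖φ (T i (f (ω i))) - α i * x i (f (ω i))‖ :=
            norm_sum_le _ _
        _ ≤ ∑ i ∈ Finset.range n, ‖φ.comp (T i) - α i • x i‖ * ‖f‖ := by
            refine Finset.sum_le_sum fun i _ => ?_
            have he : φ (T i (f (ω i))) - α i * x i (f (ω i))
                = (φ.comp (T i) - α i • x i) (f (ω i)) := by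
              simp [ContinuousLinearMap.sub_apply, ContinuousLinearMap.smul_apply]
            rw [he]
            calc ‖(φ.comp (T i) - α i • x i) (f (ω i))‖
                ≤ ‖φ.comp (T i) - α i • x i‖ * ‖f (ω i)‖ :=
                  ContinuousLinearMap.le_opNorm _ _
              _ ≤ ‖φ.comp (T i) - α i • x i‖ * ‖f‖ :=
                  mul_le_mul_of_nonneg_left (f.norm_coe_le_norm _) (norm_nonneg _)
        _ = (∑ i ∈ Finset.range n, ‖φ.comp (T i) - α i • x i‖) * ‖f‖ :=
            (Finset.sum_mul _ _ _).symm
    have hs2 : ‖φ (R n f)‖ ≤ ‖φ.comp (R n)‖ * ‖f‖ := (φ.comp (R n)).le_opNorm f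
    have hs3 : ‖Λ (R n f)‖ ≤ (1 - ∑ i ∈ Finset.range n, α i) * ‖f‖ := hΛR n f
    have hexp : (φ - Λ) f = (∑ i ∈ Finset.range n, (φ (T i (f (ω i))) - α i * x i (f (ω i))))
        + (φ (R n f) - Λ (R n f)) := by
      rw [ContinuousLinearMap.sub_apply, hφ, hΛf, Finset.sum_sub_distrib]
      ring
    rw [hexp, add_mul, add_mul]
    calc ‖_ + (φ (R n f) - Λ (R n f))‖
        ≤ ‖∑ i ∈ Finset.range n, (φ (T i (f (ω i))) - α i * x i (f (ω i)))‖
          + ‖φ (R n f) - Λ (R n f)‖ := norm_add_le _ _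
      _ ≤ (∑ i ∈ Finset.range n, ‖φ.comp (T i) - α i • x i‖) * ‖f‖
          + (‖φ (R n f)‖ + ‖Λ (R n f)‖) := by
            gcongr
            exact norm_sub_le _ _
      _ ≤ _ := by
          have := hs2; have := hs3
          linarith
  -- now the filter part
  intro l hne hball hwstar Ψ
  have hTw : ∀ i (v : X),
      Tendsto (fun φ : StrongDual ℝ C(Ω, X) => φ (T i v)) l (𝓝 (α i * x i v)) := by
    intro i v
    have := hwstar (T i v)
    rwa [hΛT i v] at this
  set pSum : ℕ → ℝ := fun n => ∑ i ∈ Finset.range n, α i with hpSum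
  have hpSum_lim : Tendsto pSum atTop (𝓝 1) := hαsum.tendsto_sum_nat
  -- lower bound on component norms
  have hlower : ∀ i, ∀ ε > (0:ℝ), ∀ᶠ φ in l, α i - ε < ‖φ.comp (T i)‖ := by
    intro i ε hε
    obtain ⟨v, hv1, hv2⟩ := exists_unit_gt (x i) (c := 1 - ε / 2)
      (by rw [hx i]; linarith)
    have h1 : α i - ε / 2 < α i * x i v := by
      nlinarith [mul_lt_mul_of_pos_left hv2 (hαpos i), hαpos i, hαle i]
    have hev := (hTw i v).eventually
      (eventually_gt_nhds (show α i - ε < α i * x i v by linarith))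
    filter_upwards [hev] with φ hφ
    have h2 : ‖(φ.comp (T i)) v‖ ≤ ‖φ.comp (T i)‖ := by
      calc ‖(φ.comp (T i)) v‖ ≤ ‖φ.comp (T i)‖ * ‖v‖ :=
            ContinuousLinearMap.le_opNorm _ _
        _ ≤ ‖φ.comp (T i)‖ := mul_le_of_le_one_right (norm_nonneg _) hv1
    have h3 : φ (T i v) ≤ ‖(φ.comp (T i)) v‖ := by
      rw [show (φ.comp (T i)) v = φ (T i v) from rfl, Real.norm_eq_abs]
      exact le_abs_self _
    linarith
  -- upper bounds from the key inequality
  have hupper : ∀ n, ∀ δ > (0:ℝ), ∀ᶠ φ in l,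
      ((∑ i ∈ Finset.range n, ‖φ.comp (T i)‖) + ‖φ.comp (R n)‖ ≤ 1
      ∧ ∀ i ∈ Finset.range n, α i - δ < ‖φ.comp (T i)‖) := by
    intro n δ hδ
    have h1 : ∀ᶠ φ in l, ∀ i ∈ Finset.range n, α i - δ < ‖φ.comp (T i)‖ :=
      (Filter.eventually_all_finset _).2 fun i _ => hlower i δ hδ
    filter_upwards [hball, h1] with φ h2 h3
    exact ⟨le_trans (hkey n φ) h2, h3⟩
  -- convergence of component norms
  have hnormT : ∀ i, Tendsto (fun φ : StrongDual ℝ C(Ω, X) => ‖φ.comp (T i)‖) l (𝓝 (α i)) := by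
    intro i
    rw [Metric.tendsto_nhds]
    intro ε hε
    obtain ⟨n, hn1, hn2⟩ : ∃ n, i < n ∧ 1 - pSum n < ε / 2 := by
      have hev := hpSum_lim.eventually
        (eventually_gt_nhds (show 1 - ε / 2 < 1 by linarith))
      obtain ⟨m, hm⟩ := (hev.and (eventually_gt_atTop i)).exists
      exact ⟨m, hm.2, by linarith [hm.1]⟩
    set δ : ℝ := ε / (2 * (n + 1)) with hδdef
    have hδ : 0 < δ := by positivity
    have hnδ : (n : ℝ) * δ ≤ ε / 2 := by
      calc (n : ℝ) * δ ≤ ((n : ℝ) + 1) * δ := by nlinarith [hδ.le]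
        _ = ε / 2 := by rw [hδdef]; field_simp
    filter_upwards [hupper n δ hδ, hlower i ε hε] with φ hφ h3
    obtain ⟨h1, h2⟩ := hφ
    rw [Real.dist_eq, abs_sub_lt_iff]
    have hmemi : i ∈ Finset.range n := Finset.mem_range.2 hn1
    have hsplit : ‖φ.comp (T i)‖ + ∑ j ∈ (Finset.range n).erase i, ‖φ.comp (T j)‖
        = ∑ j ∈ Finset.range n, ‖φ.comp (T j)‖ :=
      Finset.add_sum_erase _ (fun j => ‖φ.comp (T j)‖) hmemi
    have hbound : ∑ j ∈ (Finset.range n).erase i, (α j - δ)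
        ≤ ∑ j ∈ (Finset.range n).erase i, ‖φ.comp (T j)‖ :=
      Finset.sum_le_sum fun j hj => (h2 j (Finset.mem_of_mem_erase hj)).le
    have e1 : ∑ j ∈ (Finset.range n).erase i, (α j - δ)
        = (∑ j ∈ (Finset.range n).erase i, α j)
          - (((Finset.range n).erase i).card : ℝ) * δ := by
      rw [Finset.sum_sub_distrib, Finset.sum_const, nsmul_eq_mul]
    have e2 : α i + ∑ j ∈ (Finset.range n).erase i, α j = pSum n :=
      Finset.add_sum_erase _ _ hmemi
    have hcard : (((Finset.range n).erase i).card : ℝ) ≤ (n : ℝ) := by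
      have := le_trans (Finset.card_erase_le (s := Finset.range n) (a := i))
        (le_of_eq (Finset.card_range n))
      exact_mod_cast this
    have hcardδ : (((Finset.range n).erase i).card : ℝ) * δ ≤ (n : ℝ) * δ :=
      mul_le_mul_of_nonneg_right hcard hδ.le
    have hRnn : 0 ≤ ‖φ.comp (R n)‖ := norm_nonneg _
    constructor
    · linarith
    · linarith
  -- norm convergence of the components
  have hTnormconv : ∀ i, Tendsto (fun φ : StrongDual ℝ C(Ω, X) => φ.comp (T i))
      l (𝓝 ((α i) • x i)) := by
    intro i
    set N : StrongDual ℝ C(Ω, X) → StrongDual ℝ X :=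
      fun φ => if φ.comp (T i) = 0 then x i else ‖φ.comp (T i)‖⁻¹ • φ.comp (T i) with hNdef
    have hN1 : ∀ φ, ‖N φ‖ = 1 := by
      intro φ
      rw [hNdef]
      by_cases h : φ.comp (T i) = 0
      · simp [h, hx i]
      · have hn : ‖φ.comp (T i)‖ ≠ 0 := norm_ne_zero_iff.2 h
        simp only [if_neg h, norm_smul, norm_inv, norm_norm]
        exact inv_mul_cancel₀ hn
    have hev0 : ∀ᶠ φ in l, φ.comp (T i) ≠ 0 := by
      have hev := (hnormT i).eventually (eventually_gt_nhds (hαpos i))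
      filter_upwards [hev] with φ h
      exact norm_pos_iff.mp h
    have hNw : ∀ v, Tendsto (fun φ : StrongDual ℝ C(Ω, X) => N φ v) l (𝓝 (x i v)) := by
      intro v
      have h1 : Tendsto (fun φ : StrongDual ℝ C(Ω, X) => ‖φ.comp (T i)‖⁻¹ * (φ.comp (T i)) v)
          l (𝓝 ((α i)⁻¹ * (α i * x i v))) :=
        ((hnormT i).inv₀ (ne_of_gt (hαpos i))).mul (hTw i v)
      have h2 : (α i)⁻¹ * (α i * x i v) = x i v := by
        field_simp
        exact mul_div_cancel_left₀ _ (ne_of_gt (hαpos i))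
      rw [h2] at h1
      refine Tendsto.congr' ?_ h1
      filter_upwards [hev0] with φ h0
      rw [hNdef]
      simp only [if_neg h0]
      rfl
    have hweak := hxpc i (l.map N) (hne.map N)
      (eventually_map.2 (Eventually.of_forall fun φ => (hN1 φ).le))
      (fun v => by rw [tendsto_map'_iff]; exact hNw v)
    have hnormc := hwn (x i) (hx i) (l.map N) (hne.map N)
      (eventually_map.2 (Eventually.of_forall fun φ => hN1 φ)) hweak
    rw [tendsto_map'_iff] at hnormc
    have hNconv : Tendsto N l (𝓝 (x i)) := by
      rw [tendsto_iff_norm_sub_tendsto_zero]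
      exact hnormc
    have hsmul : Tendsto (fun φ : StrongDual ℝ C(Ω, X) => ‖φ.comp (T i)‖ • N φ)
        l (𝓝 ((α i) • x i)) := (hnormT i).smul hNconv
    refine Tendsto.congr' ?_ hsmul
    filter_upwards [hev0] with φ h0
    rw [hNdef]
    simp only [if_neg h0]
    rw [smul_smul, mul_inv_cancel₀ (norm_ne_zero_iff.2 h0), one_smul]
  -- norm convergence of φ to Λ
  have hfinal : Tendsto (fun φ : StrongDual ℝ C(Ω, X) => ‖φ - Λ‖) l (𝓝 0) := by
    rw [NormedAddCommGroup.tendsto_nhds_zero]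
    intro ε hε
    obtain ⟨n, hn⟩ : ∃ n, 1 - pSum n < ε / 4 := by
      have hev := hpSum_lim.eventually
        (eventually_gt_nhds (show 1 - ε / 4 < 1 by linarith))
      obtain ⟨m, hm⟩ := hev.exists
      exact ⟨m, by linarith⟩
    have hsums : Tendsto (fun φ : StrongDual ℝ C(Ω, X) =>
        ∑ i ∈ Finset.range n, ‖φ.comp (T i) - α i • x i‖) l (𝓝 0) := by
      have h0 : Tendsto (fun φ : StrongDual ℝ C(Ω, X) =>
          ∑ i ∈ Finset.range n, ‖φ.comp (T i) - α i • x i‖) l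
          (𝓝 (∑ i ∈ Finset.range n, (0:ℝ))) := by
        refine tendsto_finset_sum _ fun i _ => ?_
        have := (tendsto_iff_norm_sub_tendsto_zero).1 (hTnormconv i)
        exact this
      simpa using h0
    have hA : ∀ᶠ φ in l, ∑ i ∈ Finset.range n, ‖φ.comp (T i) - α i • x i‖ < ε / 4 :=
      hsums.eventually (eventually_lt_nhds (by positivity))
    set δ : ℝ := ε / (4 * (n + 1)) with hδdef
    have hδ : 0 < δ := by positivity
    have hnδ : (n : ℝ) * δ ≤ ε / 4 := by
      calc (n : ℝ) * δ ≤ ((n : ℝ) + 1) * δ := by nlinarith [hδ.le]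
        _ = ε / 4 := by rw [hδdef]; field_simp
    have hB : ∀ᶠ φ in l, ‖φ.comp (R n)‖ ≤ (1 - pSum n) + ε / 4 := by
      filter_upwards [hupper n δ hδ] with φ hφ
      obtain ⟨h1, h2⟩ := hφ
      have hs : ∑ i ∈ Finset.range n, (α i - δ) ≤ ∑ i ∈ Finset.range n, ‖φ.comp (T i)‖ :=
        Finset.sum_le_sum fun i hi => (h2 i hi).le
      have e1 : ∑ i ∈ Finset.range n, (α i - δ) = pSum n - (n : ℝ) * δ := by
        rw [Finset.sum_sub_distrib, Finset.sum_const, Finset.card_range, nsmul_eq_mul]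
      linarith
    filter_upwards [hA, hB] with φ h1 h2
    have hm := hmaster n φ
    rw [Real.norm_eq_abs, abs_of_nonneg (norm_nonneg _)]
    have : pSum n = ∑ i ∈ Finset.range n, α i := rfl
    linarith
  have hidconv : Tendsto (fun φ : StrongDual ℝ C(Ω, X) => φ) l (𝓝 Λ) := by
    rw [tendsto_iff_norm_sub_tendsto_zero]
    exact hfinal
  exact (Ψ.continuous.tendsto Λ).comp hidconv
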